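/- Let U = {x ∈ ℝ^N : x_N ≤ γ(x')} with γ : ℝ^{N−1} → ℝ satisfying γ(x')/|x'| → −∞ as |x'| → +∞. Then B(U) = S^{N-1} \ {(0,...,0,−1)} and U(U) = {(0,...,0,−1)}. -/

import Mathlib

open Filter Metric Topology

/-- The first `n` coordinates of a point of `ℝ^{n+1}`. -/
noncomputable def firstCoords (n : ℕ) (x : EuclideanSpace ℝ (Fin (n + 1))) :
    EuclideanSpace ℝ (Fin n) :=
  WithLp.toLp 2 (fun i : Fin n => x i.castSucc)

/-- The subgraph `U = {x = (x', x_N) : x_N ≤ γ(x')}` of `γ : ℝ^{N-1} → ℝ`. -/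
def subgraphSet (n : ℕ) (γ : EuclideanSpace ℝ (Fin n) → ℝ) :
    Set (EuclideanSpace ℝ (Fin (n + 1))) :=
  {x | x (Fin.last n) ≤ γ (firstCoords n x)}

section AuxLemmas

variable {n : ℕ}

lemma firstCoords_norm_sq (x : EuclideanSpace ℝ (Fin (n + 1))) :
    ‖firstCoords n x‖ ^ 2 + x (Fin.last n) ^ 2 = ‖x‖ ^ 2 := by
  have h1 : ‖x‖ ^ 2 = ∑ i : Fin (n + 1), x i ^ 2 := by
    rw [EuclideanSpace.norm_eq, Real.sq_sqrt (by positivity)]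
    simp [Real.norm_eq_abs, sq_abs]
  have h2 : ‖firstCoords n x‖ ^ 2 = ∑ i : Fin n, x i.castSucc ^ 2 := by
    rw [EuclideanSpace.norm_eq, Real.sq_sqrt (by positivity)]
    simp [firstCoords, Real.norm_eq_abs, sq_abs]
  rw [h1, h2, Fin.sum_univ_castSucc]

lemma abs_last_le_norm (x : EuclideanSpace ℝ (Fin (n + 1))) :
    |x (Fin.last n)| ≤ ‖x‖ := by
  refine le_of_pow_le_pow_left₀ two_ne_zero (norm_nonneg x) ?_
  rw [sq_abs]
  nlinarith [firstCoords_norm_sq x, sq_nonneg ‖firstCoords n x‖]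

lemma firstCoords_single (c : ℝ) :
    firstCoords n (EuclideanSpace.single (Fin.last n) c) = 0 := by
  ext i
  simp [firstCoords, EuclideanSpace.single_apply, (Fin.castSucc_lt_last i).ne]

lemma firstCoords_sub_single (y : EuclideanSpace ℝ (Fin (n + 1))) (c : ℝ) :
    firstCoords n (y - EuclideanSpace.single (Fin.last n) c) = firstCoords n y := by
  ext i
  simp [firstCoords, EuclideanSpace.single_apply, (Fin.castSucc_lt_last i).ne]

lemma dist_to_single_sq (y : EuclideanSpace ℝ (Fin (n + 1))) (c : ℝ) :
    dist y (EuclideanSpace.single (Fin.last n) c) ^ 2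
      = ‖firstCoords n y‖ ^ 2 + (y (Fin.last n) - c) ^ 2 := by
  rw [dist_eq_norm, ← firstCoords_norm_sq (y - EuclideanSpace.single (Fin.last n) c),
    firstCoords_sub_single]
  congr 2
  simp [EuclideanSpace.single_apply]

lemma le_infDist_aux {E : Type*} [NormedAddCommGroup E] {s : Set E} {x : E} {b : ℝ}
    (hs : s.Nonempty) (h : ∀ y ∈ s, b ≤ dist x y) : b ≤ infDist x s := by
  by_contra hb
  push_neg at hb
  obtain ⟨y, hy, hyd⟩ := (infDist_lt_iff hs).1 hb
  exact absurd (h y hy) (not_le.2 hyd)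

end AuxLemmas

set_option maxHeartbeats 1000000 in
/-- if `γ(x')/|x'| → −∞` as `|x'| → +∞` (with `γ` locally bounded),
then for the subgraph `U` of `γ`, `B(U) = S^{N-1} \ {(0,…,0,−1)}` and
`U(U) = {(0,…,0,−1)}`. -/
theorem subgraph_superlinear_directions (n : ℕ) (hn : 1 ≤ n)
    (γ : EuclideanSpace ℝ (Fin n) → ℝ)
    (hloc : ∀ r : ℝ, ∃ M : ℝ, ∀ x' : EuclideanSpace ℝ (Fin n), ‖x'‖ ≤ r → |γ x'| ≤ M)
    (hasymp : ∀ M : ℝ, ∃ R : ℝ, ∀ x' : EuclideanSpace ℝ (Fin n),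
      R ≤ ‖x'‖ → γ x' ≤ M * ‖x'‖) :
    ∀ ξ : EuclideanSpace ℝ (Fin (n + 1)), ‖ξ‖ = 1 →
      ((0 < Filter.liminf
          (fun τ : ℝ => Metric.infDist (τ • ξ) (subgraphSet n γ) / τ) Filter.atTop)
        ↔ ξ ≠ -EuclideanSpace.single (Fin.last n) (1 : ℝ)) ∧
      ((Filter.Tendsto
          (fun τ : ℝ => Metric.infDist (τ • ξ) (subgraphSet n γ) / τ)
          Filter.atTop (nhds 0))
        ↔ ξ = -EuclideanSpace.single (Fin.last n) (1 : ℝ)) := by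
  intro ξ hξ
  set U := subgraphSet n γ with hU
  set u : ℝ → ℝ := fun τ => Metric.infDist (τ • ξ) U / τ with hu
  -- U is nonempty
  have hUne : U.Nonempty := by
    refine ⟨EuclideanSpace.single (Fin.last n) (γ 0), ?_⟩
    show (EuclideanSpace.single (Fin.last n) (γ 0)) (Fin.last n)
        ≤ γ (firstCoords n (EuclideanSpace.single (Fin.last n) (γ 0)))
    rw [firstCoords_single]
    simp [EuclideanSpace.single_apply]
  by_cases hcase : ξ = -EuclideanSpace.single (Fin.last n) (1 : ℝ)
  · -- downward direction: eventually in the set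
    obtain ⟨M0, hM0⟩ := hloc 0
    have hγ0 : |γ 0| ≤ M0 := hM0 0 (by simp)
    have hmem : ∀ τ : ℝ, M0 ≤ τ → τ • ξ ∈ U := by
      intro τ hτ
      show (τ • ξ) (Fin.last n) ≤ γ (firstCoords n (τ • ξ))
      have h1 : firstCoords n (τ • ξ) = 0 := by
        ext i
        simp [hcase, firstCoords, EuclideanSpace.single_apply,
          (Fin.castSucc_lt_last i).ne]
      have h2 : (τ • ξ) (Fin.last n) = -τ := by
        simp [hcase, EuclideanSpace.single_apply]
      rw [h1, h2]
      have := neg_abs_le (γ 0)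
      linarith
    have hev : u =ᶠ[atTop] fun _ => (0 : ℝ) := by
      filter_upwards [eventually_ge_atTop M0] with τ hτ
      simp [hu, infDist_zero_of_mem (hmem τ hτ)]
    constructor
    · refine iff_of_false ?_ (by simpa using hcase)
      have : Filter.liminf u Filter.atTop = 0 := by
        rw [liminf_congr hev, liminf_const]
      rw [this]
      exact lt_irrefl 0
    · exact iff_of_true (Tendsto.congr' hev.symm tendsto_const_nhds) hcase
  · -- all other directions
    -- the downward ray
    set V : Set (EuclideanSpace ℝ (Fin (n + 1))) :=
      {x | (∀ i : Fin n, x i.castSucc = 0) ∧ x (Fin.last n) ≤ 0} with hVdef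
    have hVclosed : IsClosed V := by
      have hVeq : V = (⋂ i : Fin n, {x : EuclideanSpace ℝ (Fin (n + 1)) | x i.castSucc = 0})
          ∩ {x : EuclideanSpace ℝ (Fin (n + 1)) | x (Fin.last n) ≤ 0} := by
        ext x; simp [hVdef, Set.mem_iInter]
      rw [hVeq]
      have hc : ∀ j : Fin (n + 1),
          Continuous fun x : EuclideanSpace ℝ (Fin (n + 1)) => x j := fun j =>
        (EuclideanSpace.proj (𝕜 := ℝ) j).continuous
      have h1 : ∀ i : Fin n,
          IsClosed {x : EuclideanSpace ℝ (Fin (n + 1)) | x i.castSucc = (0 : ℝ)} :=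
        fun i => isClosed_eq (hc i.castSucc) continuous_const
      have h2 : IsClosed {x : EuclideanSpace ℝ (Fin (n + 1)) | x (Fin.last n) ≤ (0 : ℝ)} :=
        isClosed_le (hc (Fin.last n)) continuous_const
      exact (isClosed_iInter h1).inter h2
    have hVne : V.Nonempty := ⟨0, fun i => rfl, le_refl 0⟩
    have hξV : ξ ∉ V := by
      rintro ⟨h1, h2⟩
      apply hcase
      have hf0 : ‖firstCoords n ξ‖ = 0 := by
        have : firstCoords n ξ = 0 := by ext i; simp [firstCoords, h1 i]
        rw [this, norm_zero]
      have hsq := firstCoords_norm_sq ξ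
      rw [hf0, hξ] at hsq
      have hlast : ξ (Fin.last n) = -1 := by
        have hfac : (ξ (Fin.last n) + 1) * (ξ (Fin.last n) - 1) = 0 := by nlinarith
        rcases mul_eq_zero.1 hfac with h | h
        · linarith
        · linarith
      ext j
      induction j using Fin.lastCases with
      | last => simpa [EuclideanSpace.single_apply] using hlast
      | cast i => simp [EuclideanSpace.single_apply, (Fin.castSucc_lt_last i).ne, h1 i]
    set δ := infDist ξ V with hδdef
    have hδ : 0 < δ := (hVclosed.notMem_iff_infDist_pos hVne).1 hξV
    -- scaling estimate against the ray
    have hVscale : ∀ τ : ℝ, 0 < τ → ∀ z ∈ V, τ * δ ≤ dist (τ • ξ) z := by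
      intro τ hτ z hz
      have hz' : τ⁻¹ • z ∈ V := by
        refine ⟨fun i => ?_, ?_⟩
        · show τ⁻¹ * z i.castSucc = 0
          rw [hz.1 i, mul_zero]
        · show τ⁻¹ * z (Fin.last n) ≤ 0
          exact mul_nonpos_of_nonneg_of_nonpos (inv_nonneg.2 hτ.le) hz.2
      have heq : dist (τ • ξ) z = τ * dist ξ (τ⁻¹ • z) := by
        have h1 : τ • τ⁻¹ • z = z := smul_inv_smul₀ hτ.ne' z
        calc dist (τ • ξ) z = dist (τ • ξ) (τ • τ⁻¹ • z) := by rw [h1]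
          _ = ‖τ‖ * dist ξ (τ⁻¹ • z) := dist_smul₀ τ ξ (τ⁻¹ • z)
          _ = τ * dist ξ (τ⁻¹ • z) := by rw [Real.norm_eq_abs, abs_of_pos hτ]
      rw [heq]
      exact mul_le_mul_of_nonneg_left (infDist_le_dist_of_mem hz') hτ.le
    -- constants
    set K := max (2 / δ) 1 with hKdef
    have hK1 : (1 : ℝ) ≤ K := le_max_right _ _
    have hK0 : (0 : ℝ) < K := lt_of_lt_of_le one_pos hK1
    have hKδ : 2 ≤ K * δ := by
      have h1 : 2 / δ ≤ K := le_max_left _ _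
      calc (2 : ℝ) = 2 / δ * δ := by field_simp
        _ ≤ K * δ := mul_le_mul_of_nonneg_right h1 hδ.le
    obtain ⟨R, hR⟩ := hasymp (-K)
    set R' := max R 0 with hR'def
    have hR'0 : (0 : ℝ) ≤ R' := le_max_right _ _
    obtain ⟨M₀, hM₀⟩ := hloc R'
    set C := R' + max M₀ 0 with hCdef
    have hC : (0 : ℝ) ≤ C := add_nonneg hR'0 (le_max_right _ _)
    set T := max (8 * C / δ) 1 with hTdef
    -- main pointwise estimate
    have key : ∀ τ : ℝ, T ≤ τ → ∀ y ∈ U, τ * (δ / 8) ≤ dist (τ • ξ) y := by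
      intro τ hτ y hy
      have hτ1 : (1 : ℝ) ≤ τ := le_trans (le_max_right _ _) hτ
      have hτ0 : (0 : ℝ) < τ := lt_of_lt_of_le one_pos hτ1
      have hτC : 8 * C ≤ τ * δ := by
        have h1 : 8 * C / δ ≤ τ := le_trans (le_max_left _ _) hτ
        calc 8 * C = 8 * C / δ * δ := by field_simp
          _ ≤ τ * δ := mul_le_mul_of_nonneg_right h1 hδ.le
      have hyU : y (Fin.last n) ≤ γ (firstCoords n y) := hy
      set yN := y (Fin.last n) with hyNdef
      set y' := firstCoords n y with hy'def
      rcases le_total ‖y'‖ R' with hc2 | hc2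
      · -- bounded region
        have hyN : yN ≤ max M₀ 0 :=
          le_trans hyU (le_trans (le_abs_self _) ((hM₀ y' hc2).trans (le_max_left _ _)))
        set z := EuclideanSpace.single (Fin.last n) (min yN 0) with hzdef
        have hzV : z ∈ V := by
          refine ⟨fun i => ?_, ?_⟩
          · simp [hzdef, EuclideanSpace.single_apply, (Fin.castSucc_lt_last i).ne]
          · simp [hzdef, EuclideanSpace.single_apply]
        have hdz : dist y z ≤ C := by
          refine le_of_pow_le_pow_left₀ two_ne_zero hC ?_
          rw [hzdef, dist_to_single_sq y (min yN 0)]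
          have h1 : yN - min yN 0 = max yN 0 := by
            rcases le_total yN 0 with h | h
            · rw [min_eq_left h, max_eq_right h]; ring
            · rw [min_eq_right h, max_eq_left h]; ring
          rw [← hyNdef, ← hy'def, h1]
          have hm : max yN 0 ≤ max M₀ 0 := max_le hyN (le_max_right _ _)
          have hm0 : (0 : ℝ) ≤ max yN 0 := le_max_right _ _
          have hmM : (0 : ℝ) ≤ max M₀ 0 := le_max_right _ _
          nlinarith [norm_nonneg y']
        have h2 : τ * δ ≤ dist (τ • ξ) z := hVscale τ hτ0 z hzV
        have h3 : dist (τ • ξ) z ≤ dist (τ • ξ) y + dist y z := dist_triangle _ _ _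
        have h4 : τ * δ ≤ dist (τ • ξ) y + C := by linarith
        nlinarith [mul_nonneg hτ0.le hδ.le]
      · -- cone region
        have hγy : γ y' ≤ -K * ‖y'‖ := hR y' (le_trans (le_max_left R 0) hc2)
        have hyN : yN ≤ -K * ‖y'‖ := hyU.trans hγy
        have hyN0 : yN ≤ 0 := hyN.trans (mul_nonpos_iff.2 (Or.inr ⟨neg_nonpos.2 hK0.le, norm_nonneg y'⟩))
        set z := EuclideanSpace.single (Fin.last n) yN with hzdef
        have hzV : z ∈ V := by
          refine ⟨fun i => ?_, ?_⟩
          · simp [hzdef, EuclideanSpace.single_apply, (Fin.castSucc_lt_last i).ne]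
          · simpa [hzdef, EuclideanSpace.single_apply] using hyN0
        have hdz : dist y z = ‖y'‖ := by
          have hsq := dist_to_single_sq y yN
          rw [← hyNdef, ← hy'def, sub_self] at hsq
          have h0 : dist y z ^ 2 = ‖y'‖ ^ 2 := by
            rw [hzdef]; rw [hsq]; ring
          have := congrArg Real.sqrt h0
          rwa [Real.sqrt_sq dist_nonneg, Real.sqrt_sq (norm_nonneg _)] at this
        set d := dist (τ • ξ) y with hddef
        have hd0 : 0 ≤ d := dist_nonneg
        have hKy : K * ‖y'‖ ≤ -yN := by nlinarith
        have hyb : -yN ≤ τ + d := by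
          have h1 : |yN| ≤ ‖y‖ := abs_last_le_norm y
          have h2 : ‖y‖ ≤ d + ‖τ • ξ‖ := by
            have h3 := dist_triangle y (τ • ξ) 0
            rw [dist_zero_right, dist_zero_right, dist_comm y (τ • ξ)] at h3
            exact h3
          have h3 : ‖τ • ξ‖ = τ := by
            rw [norm_smul, hξ, mul_one, Real.norm_eq_abs, abs_of_pos hτ0]
          have h4 : -yN ≤ |yN| := neg_le_abs yN
          linarith
        have hmain : τ * δ ≤ dist (τ • ξ) z := hVscale τ hτ0 z hzV
        have htri : dist (τ • ξ) z ≤ d + dist y z := dist_triangle _ _ _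
        have e1 : τ * δ ≤ d + ‖y'‖ := by rw [← hdz]; linarith
        have e2 : K * ‖y'‖ ≤ τ + d := le_trans hKy hyb
        have f1 : K * (τ * δ) ≤ K * d + (τ + d) := by nlinarith
        have f2 : 2 * τ ≤ K * δ * τ := mul_le_mul_of_nonneg_right hKδ hτ0.le
        have f3 : K * (τ * δ) - τ ≤ (K + 1) * d := by nlinarith
        have f4 : K * (τ * δ) / 2 ≤ (K + 1) * d := by nlinarith
        have f5 : (K + 1) * (τ * (δ / 8)) ≤ K * (τ * δ) / 2 := by
          nlinarith [mul_nonneg (show (0:ℝ) ≤ 3 * K - 1 by linarith)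
            (mul_nonneg hτ0.le hδ.le)]
        exact le_of_mul_le_mul_left (f5.trans f4) (by linarith : (0:ℝ) < K + 1)
    -- eventual lower bound for u
    have hbound : ∀ᶠ τ in atTop, δ / 8 ≤ u τ := by
      filter_upwards [eventually_ge_atTop T] with τ hτ
      have hτ1 : (1 : ℝ) ≤ τ := le_trans (le_max_right _ _) hτ
      have hτ0 : (0 : ℝ) < τ := lt_of_lt_of_le one_pos hτ1
      have h1 : τ * (δ / 8) ≤ infDist (τ • ξ) U := le_infDist_aux hUne (key τ hτ)
      show δ / 8 ≤ infDist (τ • ξ) U / τ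
      rw [le_div_iff₀ hτ0]
      linarith [h1]
    -- eventual upper bound for u (coboundedness)
    obtain ⟨y₀, hy₀⟩ := hUne
    have hub : ∀ᶠ τ in atTop, u τ ≤ 1 + ‖y₀‖ := by
      filter_upwards [eventually_ge_atTop 1] with τ hτ1
      have hτ0 : (0 : ℝ) < τ := lt_of_lt_of_le one_pos hτ1
      show infDist (τ • ξ) U / τ ≤ 1 + ‖y₀‖
      rw [div_le_iff₀ hτ0]
      have h1 : infDist (τ • ξ) U ≤ dist (τ • ξ) y₀ := infDist_le_dist_of_mem hy₀
      have h2 : dist (τ • ξ) y₀ ≤ ‖τ • ξ‖ + ‖y₀‖ := by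
        rw [dist_eq_norm]; exact norm_sub_le _ _
      have h3 : ‖τ • ξ‖ = τ := by
        rw [norm_smul, hξ, mul_one, Real.norm_eq_abs, abs_of_pos hτ0]
      nlinarith [norm_nonneg y₀]
    have hcobdd : Filter.IsCoboundedUnder (· ≥ ·) atTop u :=
      Filter.isCoboundedUnder_ge_of_eventually_le atTop hub
    have hliminf : δ / 8 ≤ Filter.liminf u Filter.atTop :=
      Filter.le_liminf_of_le hcobdd hbound
    constructor
    · exact iff_of_true (lt_of_lt_of_le (by positivity) hliminf) hcase
    · refine iff_of_false ?_ hcase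
      intro htend
      have hlt : ∀ᶠ τ in atTop, u τ < δ / 8 :=
        htend.eventually_lt_const (by positivity)
      obtain ⟨τ, h1, h2⟩ := (hbound.and hlt).exists
      linarith
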